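/- Let Y ⊆ R^m be a nonempty closed convex set, x̄ ∈ R^n, ȳ ∈ S_FO(x̄), and let f be twice continuously differentiable near (x̄, ȳ). Suppose there exists μ > 0 such that ⟨w, ∇²_{yy} f(x̄, ȳ) w⟩ ≥ μ‖w‖² for all w ∈ Y − Y := {y − y' : y, y' ∈ Y}. Then S_FO has a Lipschitz single-valued localization near (x̄, ȳ). -/

import Mathlib

open Set Filter Topology Metric
open scoped RealInnerProductSpace Pointwise BigOperators

noncomputable section

/-- `R^n` as a Euclidean space. -/
abbrev Eu (n : ℕ) := EuclideanSpace ℝ (Fin n)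

/-- The directional neighborhood `V_{ε,δ}(d)` of the origin in direction `d`. -/
def dirNbhd {H : Type*} [NormedAddCommGroup H] [NormedSpace ℝ H] (d : H) (ε δ : ℝ) :
    Set H :=
  {z | z ∈ Metric.ball (0 : H) ε ∧
    (d = 0 ∨ z = 0 ∨ (z ≠ 0 ∧ ‖‖z‖⁻¹ • z - ‖d‖⁻¹ • d‖ ≤ δ))}

/-- The Fréchet (regular) normal cone to `Ω` at `z` (empty if `z ∉ Ω`). -/
def frechetNC {H : Type*} [NormedAddCommGroup H] [InnerProductSpace ℝ H]
    (Ω : Set H) (z : H) : Set H :=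
  {ζ | z ∈ Ω ∧ ∀ ε > 0, ∃ ρ > 0, ∀ z' ∈ Ω, ‖z' - z‖ < ρ → ⟪ζ, z' - z⟫ ≤ ε * ‖z' - z‖}

/-- The limiting (Mordukhovich) normal cone to `Ω` at `z`. -/
def limNC {H : Type*} [NormedAddCommGroup H] [InnerProductSpace ℝ H]
    (Ω : Set H) (z : H) : Set H :=
  {ζ | ∃ zs ζs : ℕ → H, Tendsto zs atTop (𝓝 z) ∧ Tendsto ζs atTop (𝓝 ζ) ∧
    ∀ k, ζs k ∈ frechetNC Ω (zs k)}

/-- The directional limiting normal cone to `Ω` at `z` in direction `d`. -/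
def dirNC {H : Type*} [NormedAddCommGroup H] [InnerProductSpace ℝ H]
    (Ω : Set H) (z d : H) : Set H :=
  {ζ | ∃ (t : ℕ → ℝ) (ds ζs : ℕ → H), (∀ k, 0 < t k) ∧ Tendsto t atTop (𝓝 0) ∧
    Tendsto ds atTop (𝓝 d) ∧ Tendsto ζs atTop (𝓝 ζ) ∧
    ∀ k, ζs k ∈ frechetNC Ω (z + t k • ds k)}

/-- The contingent (tangent) cone to `Ω` at `z`. -/
def tangentC {H : Type*} [NormedAddCommGroup H] [NormedSpace ℝ H]
    (Ω : Set H) (z : H) : Set H :=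
  {d | ∃ (t : ℕ → ℝ) (ds : ℕ → H), (∀ k, 0 < t k) ∧ Tendsto t atTop (𝓝 0) ∧
    Tendsto ds atTop (𝓝 d) ∧ ∀ k, z + t k • ds k ∈ Ω}

/-- The Fréchet normal cone for subsets of a product of inner product spaces,
with the canonical pairing `⟪ζ₁, w₁⟫ + ⟪ζ₂, w₂⟫`. -/
def frechetNCP {H K : Type*} [NormedAddCommGroup H] [InnerProductSpace ℝ H]
    [NormedAddCommGroup K] [InnerProductSpace ℝ K] (Ω : Set (H × K)) (z : H × K) :
    Set (H × K) :=
  {ζ | z ∈ Ω ∧ ∀ ε > 0, ∃ ρ > 0, ∀ z' ∈ Ω, ‖z' - z‖ < ρ →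
    ⟪ζ.1, z'.1 - z.1⟫ + ⟪ζ.2, z'.2 - z.2⟫ ≤ ε * ‖z' - z‖}

/-- The limiting normal cone for subsets of a product of inner product spaces. -/
def limNCP {H K : Type*} [NormedAddCommGroup H] [InnerProductSpace ℝ H]
    [NormedAddCommGroup K] [InnerProductSpace ℝ K] (Ω : Set (H × K)) (z : H × K) :
    Set (H × K) :=
  {ζ | ∃ zs ζs : ℕ → H × K, Tendsto zs atTop (𝓝 z) ∧ Tendsto ζs atTop (𝓝 ζ) ∧
    ∀ k, ζs k ∈ frechetNCP Ω (zs k)}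

/-- The directional limiting normal cone for subsets of a product space. -/
def dirNCP {H K : Type*} [NormedAddCommGroup H] [InnerProductSpace ℝ H]
    [NormedAddCommGroup K] [InnerProductSpace ℝ K] (Ω : Set (H × K)) (z d : H × K) :
    Set (H × K) :=
  {ζ | ∃ (t : ℕ → ℝ) (ds ζs : ℕ → H × K), (∀ k, 0 < t k) ∧ Tendsto t atTop (𝓝 0) ∧
    Tendsto ds atTop (𝓝 d) ∧ Tendsto ζs atTop (𝓝 ζ) ∧
    ∀ k, ζs k ∈ frechetNCP Ω (z + t k • ds k)}

/-- Directional metric subregularity of the set-valued map `Φ` at `(zbar, wbar)`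
in direction `d`. -/
def MetrSubregDir {H K : Type*} [NormedAddCommGroup H] [NormedSpace ℝ H]
    [PseudoMetricSpace K] (Φ : H → Set K) (zbar : H) (wbar : K) (d : H) : Prop :=
  ∃ ε > 0, ∃ δ > 0, ∃ κ > 0, ∀ z : H, z - zbar ∈ dirNbhd d ε δ →
    Metric.infDist z {z' | wbar ∈ Φ z'} ≤ κ * Metric.infDist wbar (Φ z)

/-- The lower-level solution map `S(x) = argmin_{y ∈ Y} f(x,y)`. -/
def Ssol {n m : ℕ} (Y : Set (EuclideanSpace ℝ (Fin m)))
    (f : EuclideanSpace ℝ (Fin n) → EuclideanSpace ℝ (Fin m) → ℝ)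
    (x : EuclideanSpace ℝ (Fin n)) : Set (EuclideanSpace ℝ (Fin m)) :=
  {y | y ∈ Y ∧ ∀ y' ∈ Y, f x y ≤ f x y'}

/-- The partial gradient `∇_y f(x,y)`. -/
def gradY {n m : ℕ} (f : EuclideanSpace ℝ (Fin n) → EuclideanSpace ℝ (Fin m) → ℝ)
    (x : EuclideanSpace ℝ (Fin n)) (y : EuclideanSpace ℝ (Fin m)) :
    EuclideanSpace ℝ (Fin m) :=
  gradient (f x) y

/-- The partial gradient `∇_x f(x,y)`. -/
def gradX {n m : ℕ} (f : EuclideanSpace ℝ (Fin n) → EuclideanSpace ℝ (Fin m) → ℝ)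
    (x : EuclideanSpace ℝ (Fin n)) (y : EuclideanSpace ℝ (Fin m)) :
    EuclideanSpace ℝ (Fin n) :=
  gradient (fun x' => f x' y) x

/-- The first-order (stationary) solution map
`S_FO(x) = {y ∈ Y : 0 ∈ ∇_y f(x,y) + N̂_Y(y)}`. -/
def SFO {n m : ℕ} (Y : Set (EuclideanSpace ℝ (Fin m)))
    (f : EuclideanSpace ℝ (Fin n) → EuclideanSpace ℝ (Fin m) → ℝ)
    (x : EuclideanSpace ℝ (Fin n)) : Set (EuclideanSpace ℝ (Fin m)) :=
  {y | y ∈ Y ∧ -gradY f x y ∈ frechetNC Y y}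

/-- The graph of the Fréchet normal cone map `y ⇉ N̂_Y(y)`. -/
def gphN {m : ℕ} (Y : Set (EuclideanSpace ℝ (Fin m))) :
    Set (EuclideanSpace ℝ (Fin m) × EuclideanSpace ℝ (Fin m)) :=
  {p | p.2 ∈ frechetNC Y p.1}

/-- `S` has a Lipschitz single-valued localization near `(xbar, ybar)`. -/
def HasLipLoc {n m : ℕ} (S : EuclideanSpace ℝ (Fin n) → Set (EuclideanSpace ℝ (Fin m)))
    (xbar : EuclideanSpace ℝ (Fin n)) (ybar : EuclideanSpace ℝ (Fin m)) : Prop :=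
  ∃ (U : Set (EuclideanSpace ℝ (Fin n))) (V : Set (EuclideanSpace ℝ (Fin m)))
    (s : EuclideanSpace ℝ (Fin n) → EuclideanSpace ℝ (Fin m)) (L : NNReal),
      IsOpen U ∧ xbar ∈ U ∧ IsOpen V ∧ ybar ∈ V ∧ LipschitzOnWith L s U ∧
      (∀ x ∈ U, s x ∈ V) ∧ ∀ x ∈ U, S x ∩ V = {s x}

/-- The inf-compactness condition at `xbar` relative to `ybar ∈ S(xbar)`. -/
def InfCompact {n m : ℕ} (Y : Set (EuclideanSpace ℝ (Fin m)))
    (f : EuclideanSpace ℝ (Fin n) → EuclideanSpace ℝ (Fin m) → ℝ)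
    (xbar : EuclideanSpace ℝ (Fin n)) (ybar : EuclideanSpace ℝ (Fin m)) : Prop :=
  ∃ (C : Set (EuclideanSpace ℝ (Fin m))) (α : ℝ) (U : Set (EuclideanSpace ℝ (Fin n))),
    IsCompact C ∧ f xbar ybar < α ∧ U ∈ 𝓝 xbar ∧
    (∀ x ∈ U, {y | y ∈ Y ∧ f x y ≤ α} ⊆ C) ∧ ∀ x ∈ U, (Ssol Y f x).Nonempty

section auxiliary

lemma frechetNC_convex {H : Type*} [NormedAddCommGroup H] [InnerProductSpace ℝ H]
    {Y : Set H} (hY : Convex ℝ Y) {y : H} (hy : y ∈ Y) (ζ : H) :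
    ζ ∈ frechetNC Y y ↔ ∀ y' ∈ Y, ⟪ζ, y' - y⟫ ≤ 0 := by
  constructor
  · rintro ⟨-, h⟩ y' hy'
    have key : ∀ ε > (0:ℝ), ⟪ζ, y' - y⟫ ≤ ε * ‖y' - y‖ := by
      intro ε hε
      obtain ⟨ρ, hρ, hd⟩ := h ε hε
      rcases eq_or_ne y' y with rfl | hne
      · simp
      have hnorm : (0:ℝ) < ‖y' - y‖ := by
        simpa [sub_eq_zero] using norm_pos_iff.mpr (sub_ne_zero.mpr hne)
      set t : ℝ := min 1 (ρ / (2 * ‖y' - y‖)) with ht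
      have ht0 : 0 < t := lt_min one_pos (by positivity)
      have ht1 : t ≤ 1 := min_le_left _ _
      have hz' : y + t • (y' - y) ∈ Y := by
        have := hY hy hy' (by linarith : (0:ℝ) ≤ 1 - t) ht0.le (by ring)
        convert this using 1
        module
      have hsmall : ‖(y + t • (y' - y)) - y‖ < ρ := by
        have : ‖(y + t • (y' - y)) - y‖ = t * ‖y' - y‖ := by
          simp [norm_smul, abs_of_pos ht0]
        rw [this]
        calc t * ‖y' - y‖ ≤ (ρ / (2 * ‖y' - y‖)) * ‖y' - y‖ := by
              apply mul_le_mul_of_nonneg_right (min_le_right _ _) hnorm.le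
          _ = ρ / 2 := by field_simp
          _ < ρ := by linarith
      have := hd _ hz' hsmall
      have heq : (y + t • (y' - y)) - y = t • (y' - y) := by abel
      rw [heq, real_inner_smul_right, norm_smul, Real.norm_eq_abs, abs_of_pos ht0] at this
      have := (mul_le_mul_iff_right₀ ht0).mp (by linarith [this] : t * ⟪ζ, y' - y⟫ ≤ t * (ε * ‖y' - y‖))
      linarith
    rcases eq_or_ne y' y with rfl | hne
    · simp
    have hnorm : (0:ℝ) < ‖y' - y‖ := norm_pos_iff.mpr (sub_ne_zero.mpr hne)
    by_contra hcon
    push_neg at hcon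
    have hk := key (⟪ζ, y' - y⟫ / (2 * ‖y' - y‖)) (by positivity)
    have h2 : ⟪ζ, y' - y⟫ / (2 * ‖y' - y‖) * ‖y' - y‖ = ⟪ζ, y' - y⟫ / 2 := by
      field_simp
    rw [h2] at hk
    linarith
  · intro h
    exact ⟨hy, fun ε hε => ⟨1, one_pos, fun z' hz' _ =>
      le_trans (h z' hz') (by positivity)⟩⟩

lemma exists_projC {H : Type*} [NormedAddCommGroup H] [InnerProductSpace ℝ H] [CompleteSpace H]
    {Y : Set H} (hYne : Y.Nonempty) (hYcl : IsClosed Y)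
    (hYcv : Convex ℝ Y) (u : H) : ∃ v ∈ Y, ∀ w ∈ Y, ⟪u - v, w - v⟫ ≤ 0 := by
  obtain ⟨v, hv, hmin⟩ := exists_norm_eq_iInf_of_complete_convex hYne
    (hYcl.isComplete) hYcv u
  exact ⟨v, hv, (norm_eq_iInf_iff_real_inner_le_zero hYcv hv).mp hmin⟩

lemma projC_unique {H : Type*} [NormedAddCommGroup H] [InnerProductSpace ℝ H]
    {Y : Set H} {u v v' : H} (hv : v ∈ Y)
    (h1 : ∀ w ∈ Y, ⟪u - v, w - v⟫ ≤ 0) (hv' : v' ∈ Y)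
    (h2 : ∀ w ∈ Y, ⟪u - v', w - v'⟫ ≤ 0) : v = v' := by
  have a := h1 v' hv'
  have b := h2 v hv
  have key : ‖v' - v‖ ^ 2 ≤ 0 := by
    have : ⟪u - v, v' - v⟫ + ⟪u - v', v - v'⟫ = ‖v' - v‖ ^ 2 := by
      have e1 : ⟪u - v', v - v'⟫ = -⟪u - v', v' - v⟫ := by
        rw [← inner_neg_right]; congr 1; abel
      rw [e1, ← real_inner_self_eq_norm_sq]
      have : (⟪u - v, v' - v⟫:ℝ) - ⟪u - v', v' - v⟫ = ⟪v' - v, v' - v⟫ := by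
        rw [← inner_sub_left]; congr 1; abel
      linarith [this]
    linarith [this]
  have : v' - v = 0 := by
    have := pow_eq_zero_iff (n := 2) (by norm_num) |>.mp
      (le_antisymm key (by positivity))
    simpa [sub_eq_zero] using norm_eq_zero.mp this
  rw [sub_eq_zero] at this; exact this.symm

lemma projC_nonexpansive {H : Type*} [NormedAddCommGroup H] [InnerProductSpace ℝ H]
    {Y : Set H} {u u' v v' : H} (hv : v ∈ Y)
    (h1 : ∀ w ∈ Y, ⟪u - v, w - v⟫ ≤ 0) (hv' : v' ∈ Y)
    (h2 : ∀ w ∈ Y, ⟪u' - v', w - v'⟫ ≤ 0) : ‖v - v'‖ ≤ ‖u - u'‖ := by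
  have a := h1 v' hv'
  have b := h2 v hv
  have key : ‖v - v'‖ ^ 2 ≤ ⟪u - u', v - v'⟫ := by
    have e1 : (⟪u - v, v' - v⟫:ℝ) = -⟪u - v, v - v'⟫ := by
      rw [← inner_neg_right]; congr 1; abel
    have e2 : (⟪u - v, v - v'⟫:ℝ) - ⟪u' - v', v - v'⟫ = ⟪u - u', v - v'⟫ - ‖v - v'‖^2 := by
      rw [← real_inner_self_eq_norm_sq, ← inner_sub_left, ← inner_sub_left]
      congr 1
      abel
    linarith [e1 ▸ a, b, e2]
  rcases eq_or_lt_of_le (norm_nonneg (v - v')) with h0 | h0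
  · rw [← h0]; exact norm_nonneg _
  · have := key.trans (real_inner_le_norm (u - u') (v - v'))
    have h3 : ‖v - v'‖ * ‖v - v'‖ ≤ ‖u - u'‖ * ‖v - v'‖ := by
      nlinarith [this]
    exact le_of_mul_le_mul_right h3 h0

lemma gradY_eq_of_differentiable {n m : ℕ} (f : Eu n → Eu m → ℝ) {p : Eu n × Eu m}
    (hF : DifferentiableAt ℝ (fun q : Eu n × Eu m => f q.1 q.2) p) :
    gradY f p.1 p.2 = (InnerProductSpace.toDual ℝ (Eu m)).symm
      ((fderiv ℝ (fun q : Eu n × Eu m => f q.1 q.2) p).comp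
        (ContinuousLinearMap.inr ℝ (Eu n) (Eu m))) := by
  have h1 : HasFDerivAt (fun q : Eu n × Eu m => f q.1 q.2)
      (fderiv ℝ (fun q : Eu n × Eu m => f q.1 q.2) p) p := hF.hasFDerivAt
  have h2 : HasFDerivAt (fun y : Eu m => (p.1, y))
      (ContinuousLinearMap.inr ℝ (Eu n) (Eu m)) p.2 := hasFDerivAt_prodMk_right p.1 p.2
  have h3 : HasFDerivAt (f p.1)
      ((fderiv ℝ (fun q : Eu n × Eu m => f q.1 q.2) p).comp
        (ContinuousLinearMap.inr ℝ (Eu n) (Eu m))) p.2 := by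
    have := (h1.comp p.2 (by simpa using h2) : HasFDerivAt
      ((fun q : Eu n × Eu m => f q.1 q.2) ∘ (fun y : Eu m => (p.1, y))) _ p.2)
    exact this
  rw [gradY, gradient, h3.fderiv]

lemma gradY_contDiffOn {n m : ℕ} (f : Eu n → Eu m → ℝ) {W : Set (Eu n × Eu m)} (hW : IsOpen W)
    (hF : ContDiffOn ℝ 2 (fun q : Eu n × Eu m => f q.1 q.2) W) :
    ContDiffOn ℝ 1 (fun p : Eu n × Eu m => gradY f p.1 p.2) W := by
  set F := fun q : Eu n × Eu m => f q.1 q.2 with hFdef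
  have h1 : ContDiffOn ℝ 1 (fderiv ℝ F) W :=
    hF.fderiv_of_isOpen hW (by norm_num)
  have h2 : ContDiffOn ℝ 1 (fun p => (fderiv ℝ F p).comp
      (ContinuousLinearMap.inr ℝ (Eu n) (Eu m))) W :=
    h1.clm_comp contDiffOn_const
  have h3 : ContDiffOn ℝ 1 (fun p => (InnerProductSpace.toDual ℝ (Eu m)).symm
      ((fderiv ℝ F p).comp (ContinuousLinearMap.inr ℝ (Eu n) (Eu m)))) W := by
    have hlin : ContDiff ℝ 1 ((InnerProductSpace.toDual ℝ (Eu m)).symm : (Eu m →L[ℝ] ℝ) → Eu m) :=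
      (InnerProductSpace.toDual ℝ (Eu m)).symm.toContinuousLinearEquiv.toContinuousLinearMap.contDiff
    exact hlin.comp_contDiffOn h2
  exact h3.congr fun p hp => gradY_eq_of_differentiable f
    ((hF.contDiffAt (hW.mem_nhds hp)).differentiableAt (by norm_num))

lemma norm_inr_le_one {n m : ℕ} :
    ‖ContinuousLinearMap.inr ℝ (Eu n) (Eu m)‖ ≤ 1 :=
  ContinuousLinearMap.opNorm_le_bound _ zero_le_one fun z => by
    simp [ContinuousLinearMap.inr_apply, Prod.norm_def]

lemma le_of_sq_le_sq' {X Z : ℝ} (hx : 0 ≤ X) (hz : 0 ≤ Z) (h : X^2 ≤ Z^2) : X ≤ Z := by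
  nlinarith [sq_nonneg (X - Z), sq_nonneg (X + Z)]

lemma contraction_sq {a lam Lr mu2 nd ne ip : ℝ} (hnd : 0 ≤ nd) (hne : 0 ≤ ne)
    (hLr : 0 ≤ Lr) (hea1 : lam * mu2 = a) (hea2 : lam^2 * Lr^2 = a) (ha0 : 0 < a)
    (hlam : 0 < lam) (hi : mu2 * nd^2 ≤ ip) (he : ne ≤ Lr * nd) :
    nd^2 - 2*(lam*ip) + lam^2*ne^2 ≤ ((1 - a/2)*nd)^2 := by
  have h1 : ne^2 ≤ Lr^2 * nd^2 := by
    nlinarith [mul_le_mul he he hne (mul_nonneg hLr hnd)]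
  have h2 : lam^2*ne^2 ≤ a*nd^2 := by
    calc lam^2*ne^2 ≤ lam^2*(Lr^2*nd^2) := mul_le_mul_of_nonneg_left h1 (sq_nonneg lam)
      _ = a*nd^2 := by rw [← hea2]; ring
  have h3 : a*nd^2 ≤ lam*ip := by
    calc a*nd^2 = lam*(mu2*nd^2) := by rw [← hea1]; ring
      _ ≤ lam*ip := mul_le_mul_of_nonneg_left hi hlam.le
  nlinarith [h2, h3, sq_nonneg (a*nd)]

end auxiliary

def Gmap {n m : ℕ} (f : Eu n → Eu m → ℝ) (p : Eu n × Eu m) : Eu m := gradY f p.1 p.2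

set_option maxHeartbeats 1000000 in
theorem stmt3' {n m : ℕ} (Y : Set (Eu m)) (hYne : Y.Nonempty) (hYcl : IsClosed Y)
    (hYcv : Convex ℝ Y) (f : Eu n → Eu m → ℝ) (xbar : Eu n) (ybar : Eu m)
    (hybar : ybar ∈ SFO Y f xbar)
    (hf : ContDiffAt ℝ 2 (fun p : Eu n × Eu m => f p.1 p.2) (xbar, ybar))
    (μ : ℝ) (hμ : 0 < μ)
    (hmono : ∀ y ∈ Y, ∀ y' ∈ Y,
      μ * ‖y - y'‖ ^ 2 ≤ ⟪y - y', fderiv ℝ (fun y'' => gradY f xbar y'') ybar (y - y')⟫) :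
    HasLipLoc (SFO Y f) xbar ybar := by
  classical
  -- C² neighborhood
  obtain ⟨W0, hW0n, hFW0⟩ := hf.contDiffOn le_rfl (by simp)
  have hWopen : IsOpen (interior W0) := isOpen_interior
  have hpbarW : (xbar, ybar) ∈ interior W0 := mem_interior_iff_mem_nhds.mpr hW0n
  have hFW : ContDiffOn ℝ 2 (fun q : Eu n × Eu m => f q.1 q.2) (interior W0) :=
    hFW0.mono interior_subset
  have hGW : ContDiffOn ℝ 1 (Gmap f) (interior W0) := gradY_contDiffOn f hWopen hFW
  -- partial derivative in y
  have hpart : ∀ p ∈ interior W0, HasFDerivAt (fun y' => Gmap f (p.1, y'))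
      ((fderiv ℝ (Gmap f) p).comp (ContinuousLinearMap.inr ℝ (Eu n) (Eu m))) p.2 := by
    intro p hp
    have hdG : HasFDerivAt (Gmap f) (fderiv ℝ (Gmap f) p) p :=
      ((hGW.contDiffAt (hWopen.mem_nhds hp)).differentiableAt one_ne_zero).hasFDerivAt
    have h2 := hasFDerivAt_prodMk_right (𝕜 := ℝ) p.1 p.2
    have := hdG.comp p.2 (by simpa using h2)
    exact this
  have hDfd : fderiv ℝ (fun y'' => gradY f xbar y'') ybar
      = (fderiv ℝ (Gmap f) (xbar, ybar)).comp (ContinuousLinearMap.inr ℝ (Eu n) (Eu m)) :=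
    (hpart (xbar, ybar) hpbarW).fderiv
  set D : Eu m →L[ℝ] Eu m :=
    (fderiv ℝ (Gmap f) (xbar, ybar)).comp (ContinuousLinearMap.inr ℝ (Eu n) (Eu m)) with hDdef
  have hmonoD : ∀ y ∈ Y, ∀ y' ∈ Y, μ * ‖y - y'‖^2 ≤ ⟪D (y - y'), y - y'⟫ := by
    intro y hy y' hy'
    have h := hmono y hy y' hy'
    rw [hDfd] at h
    rw [real_inner_comm]
    exact h
  -- continuity of the derivative
  have hcontD : ContinuousAt (fderiv ℝ (Gmap f)) (xbar, ybar) :=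
    (hGW.continuousOn_fderiv_of_isOpen hWopen le_rfl).continuousAt (hWopen.mem_nhds hpbarW)
  obtain ⟨r2, hr2pos, hDnear⟩ := Metric.continuousAt_iff.mp hcontD (μ/2) (by positivity)
  -- Lipschitz neighborhood
  obtain ⟨K, t, htmem, hKlip⟩ :=
    (hGW.contDiffAt (hWopen.mem_nhds hpbarW)).exists_lipschitzOnWith
  obtain ⟨rt, hrtpos, hrt⟩ := Metric.mem_nhds_iff.mp htmem
  obtain ⟨rw', hrwpos, hrw⟩ := Metric.mem_nhds_iff.mp (hWopen.mem_nhds hpbarW)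
  set r1 : ℝ := min r2 (min rt rw') with hr1
  have hr1pos : 0 < r1 := by rw [hr1]; exact lt_min hr2pos (lt_min hrtpos hrwpos)
  clear_value r1
  have hballW : Metric.ball (xbar, ybar) r1 ⊆ interior W0 := by
    refine Subset.trans (Metric.ball_subset_ball ?_) hrw
    rw [hr1]; exact le_trans (min_le_right _ _) (min_le_right _ _)
  have hballt : Metric.ball (xbar, ybar) r1 ⊆ t := by
    refine Subset.trans (Metric.ball_subset_ball ?_) hrt
    rw [hr1]; exact le_trans (min_le_right _ _) (min_le_left _ _)
  have hballD : ∀ p ∈ Metric.ball (xbar, ybar) r1,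
      ‖fderiv ℝ (Gmap f) p - fderiv ℝ (Gmap f) (xbar, ybar)‖ ≤ μ/2 := by
    intro p hp
    have : dist p (xbar, ybar) < r2 := lt_of_lt_of_le (Metric.mem_ball.mp hp)
      (by rw [hr1]; exact min_le_left _ _)
    have := hDnear this
    rw [dist_eq_norm] at this
    exact this.le
  set r0 : ℝ := r1/2 with hr0
  have hr0pos : 0 < r0 := by rw [hr0]; positivity
  have hr0r1 : r0 < r1 := by rw [hr0]; linarith
  clear_value r0
  -- bound on the partial derivative deviation
  have hDyb : ∀ p ∈ Metric.ball (xbar, ybar) r1,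
      ‖(fderiv ℝ (Gmap f) p).comp (ContinuousLinearMap.inr ℝ (Eu n) (Eu m)) - D‖ ≤ μ/2 := by
    intro p hp
    have h1 : (fderiv ℝ (Gmap f) p).comp (ContinuousLinearMap.inr ℝ (Eu n) (Eu m)) - D
        = (fderiv ℝ (Gmap f) p - fderiv ℝ (Gmap f) (xbar, ybar)).comp
          (ContinuousLinearMap.inr ℝ (Eu n) (Eu m)) := by
      rw [hDdef, ContinuousLinearMap.sub_comp]
    rw [h1]
    calc ‖(fderiv ℝ (Gmap f) p - fderiv ℝ (Gmap f) (xbar, ybar)).comp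
          (ContinuousLinearMap.inr ℝ (Eu n) (Eu m))‖
        ≤ ‖fderiv ℝ (Gmap f) p - fderiv ℝ (Gmap f) (xbar, ybar)‖ *
          ‖ContinuousLinearMap.inr ℝ (Eu n) (Eu m)‖ := ContinuousLinearMap.opNorm_comp_le _ _
      _ ≤ (μ/2) * 1 := mul_le_mul (hballD p hp) norm_inr_le_one (norm_nonneg _) (by positivity)
      _ = μ/2 := mul_one _
  -- strong monotonicity near the reference point
  have hkey : ∀ x : Eu n, dist x xbar < r1 → ∀ y ∈ Y ∩ Metric.closedBall ybar r0,
      ∀ y' ∈ Y ∩ Metric.closedBall ybar r0,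
      μ/2 * ‖y - y'‖^2 ≤ ⟪Gmap f (x, y) - Gmap f (x, y'), y - y'⟫ := by
    intro x hx y hy y' hy'
    have hmem : ∀ z ∈ Metric.closedBall ybar r0, (x, z) ∈ Metric.ball (xbar, ybar) r1 := by
      intro z hz
      rw [Metric.mem_ball, Prod.dist_eq]
      exact max_lt hx (lt_of_le_of_lt (Metric.mem_closedBall.mp hz) hr0r1)
    have hder : ∀ z ∈ Metric.closedBall ybar r0,
        HasFDerivWithinAt (fun z' => Gmap f (x, z') - D z')
          ((fderiv ℝ (Gmap f) (x, z)).comp (ContinuousLinearMap.inr ℝ (Eu n) (Eu m)) - D)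
          (Metric.closedBall ybar r0) z := by
      intro z hz
      have h1 := hpart (x, z) (hballW (hmem z hz))
      exact (h1.sub (D.hasFDerivAt)).hasFDerivWithinAt
    have hbound : ∀ z ∈ Metric.closedBall ybar r0,
        ‖(fderiv ℝ (Gmap f) (x, z)).comp (ContinuousLinearMap.inr ℝ (Eu n) (Eu m)) - D‖
          ≤ μ/2 := fun z hz => hDyb _ (hmem z hz)
    have hmvt := (convex_closedBall ybar r0).norm_image_sub_le_of_norm_hasFDerivWithin_le
      hder hbound hy'.2 hy.2
    -- hmvt : ‖(G(x,y) - D y) - (G(x,y') - D y')‖ ≤ μ/2 * ‖y - y'‖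
    have hsplit : Gmap f (x, y) - Gmap f (x, y')
        = ((Gmap f (x, y) - D y) - (Gmap f (x, y') - D y')) + D (y - y') := by
      rw [map_sub]; abel
    rw [hsplit, inner_add_left]
    have habs := abs_real_inner_le_norm
      ((Gmap f (x, y) - D y) - (Gmap f (x, y') - D y')) (y - y')
    have h4 : -(‖(Gmap f (x, y) - D y) - (Gmap f (x, y') - D y')‖ * ‖y - y'‖)
        ≤ ⟪(Gmap f (x, y) - D y) - (Gmap f (x, y') - D y'), y - y'⟫ := by
      have := abs_le.mp habs
      linarith [this.1]
    have h5 : ‖(Gmap f (x, y) - D y) - (Gmap f (x, y') - D y')‖ * ‖y - y'‖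
        ≤ (μ/2 * ‖y - y'‖) * ‖y - y'‖ :=
      mul_le_mul_of_nonneg_right hmvt (norm_nonneg _)
    have h3 := hmonoD y hy.1 y' hy'.1
    nlinarith [h3, h4, h5, norm_nonneg (y - y')]
  -- constants
  set Lr : ℝ := (K:ℝ) + μ + 1 with hLrdef
  have hKnn : (0:ℝ) ≤ K := K.coe_nonneg
  have hLrpos : 0 < Lr := by rw [hLrdef]; positivity
  have hμLr : μ/2 < Lr := by rw [hLrdef]; linarith
  set lam : ℝ := (μ/2) / Lr^2 with hlamdef
  have hlampos : 0 < lam := by rw [hlamdef]; positivity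
  set a : ℝ := ((μ/2)/Lr)^2 with hadef
  have ha0 : 0 < a := by rw [hadef]; positivity
  have ha1 : a < 1 := by
    have h1 : (μ/2)/Lr < 1 := (div_lt_one hLrpos).mpr hμLr
    have h2 : 0 < (μ/2)/Lr := by positivity
    rw [hadef]; nlinarith
  set q : ℝ := 1 - a/2 with hqdef
  have hq1 : q < 1 := by rw [hqdef]; linarith
  have hq0 : 0 < q := by rw [hqdef]; linarith
  have h1q : 0 < 1 - q := by rw [hqdef]; linarith
  have hea1 : lam * (μ/2) = a := by rw [hlamdef, hadef]; field_simp
  have hea2 : lam^2 * Lr^2 = a := by rw [hlamdef, hadef]; field_simp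
  clear_value Lr lam a q
  -- Lipschitz bound for G
  have hGlip : ∀ p ∈ Metric.ball ((xbar, ybar) : Eu n × Eu m) r1,
      ∀ p' ∈ Metric.ball ((xbar, ybar) : Eu n × Eu m) r1,
      ‖Gmap f p - Gmap f p'‖ ≤ Lr * ‖p - p'‖ := by
    intro p hp p' hp'
    have h := hKlip.dist_le_mul p (hballt hp) p' (hballt hp')
    rw [dist_eq_norm, dist_eq_norm] at h
    calc ‖Gmap f p - Gmap f p'‖ ≤ K * ‖p - p'‖ := h
      _ ≤ Lr * ‖p - p'‖ := mul_le_mul_of_nonneg_right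
          (by rw [hLrdef]; linarith) (norm_nonneg _)
  -- contraction estimate
  have hcon : ∀ x : Eu n, dist x xbar < r1 → ∀ y ∈ Y ∩ Metric.closedBall ybar r0,
      ∀ y' ∈ Y ∩ Metric.closedBall ybar r0,
      ‖(y - lam • Gmap f (x, y)) - (y' - lam • Gmap f (x, y'))‖ ≤ q * ‖y - y'‖ := by
    intro x hx y hy y' hy'
    have hmemy : ((x, y) : Eu n × Eu m) ∈ Metric.ball (xbar, ybar) r1 := by
      rw [Metric.mem_ball, Prod.dist_eq]
      exact max_lt hx (lt_of_le_of_lt (Metric.mem_closedBall.mp hy.2) hr0r1)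
    have hmemy' : ((x, y') : Eu n × Eu m) ∈ Metric.ball (xbar, ybar) r1 := by
      rw [Metric.mem_ball, Prod.dist_eq]
      exact max_lt hx (lt_of_le_of_lt (Metric.mem_closedBall.mp hy'.2) hr0r1)
    have he : ‖Gmap f (x, y) - Gmap f (x, y')‖ ≤ Lr * ‖y - y'‖ := by
      have h := hGlip _ hmemy _ hmemy'
      have hnp : ‖((x, y) : Eu n × Eu m) - (x, y')‖ = ‖y - y'‖ := by
        rw [Prod.norm_def]
        simp
      rw [hnp] at h; exact h
    have hi := hkey x hx y hy y' hy'
    have hrear : (y - lam • Gmap f (x, y)) - (y' - lam • Gmap f (x, y'))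
        = (y - y') - lam • (Gmap f (x, y) - Gmap f (x, y')) := by module
    rw [hrear]
    have hsq : ‖(y - y') - lam • (Gmap f (x, y) - Gmap f (x, y'))‖^2
        = ‖y - y'‖^2 - 2 * (lam * ⟪y - y', Gmap f (x, y) - Gmap f (x, y')⟫)
          + lam^2 * ‖Gmap f (x, y) - Gmap f (x, y')‖^2 := by
      rw [norm_sub_sq_real, real_inner_smul_right, norm_smul,
        Real.norm_eq_abs, abs_of_pos hlampos]
      ring
    have hflip : ⟪y - y', Gmap f (x, y) - Gmap f (x, y')⟫
        = ⟪Gmap f (x, y) - Gmap f (x, y'), y - y'⟫ := real_inner_comm _ _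
    have hsq2 : ‖(y - y') - lam • (Gmap f (x, y) - Gmap f (x, y'))‖^2 ≤ (q * ‖y - y'‖)^2 := by
      rw [hsq, hflip]
      have hcs := contraction_sq (norm_nonneg (y - y'))
        (norm_nonneg (Gmap f (x, y) - Gmap f (x, y'))) hLrpos.le hea1 hea2 ha0 hlampos hi he
      rw [hqdef]
      convert hcs using 2 <;> ring
    refine le_of_sq_le_sq' (norm_nonneg _) (mul_nonneg hq0.le (norm_nonneg _)) hsq2
  -- projection onto Y
  choose P hP1 hP2 using fun u : Eu m => exists_projC hYne hYcl hYcv u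
  -- fixed-point / VI equivalence
  have hfix_of_VI : ∀ (x : Eu n) (y : Eu m), y ∈ Y →
      (∀ w ∈ Y, ⟪-(Gmap f (x, y)), w - y⟫ ≤ 0) →
      P (y - lam • Gmap f (x, y)) = y := by
    intro x y hy hVI
    apply projC_unique (hP1 _) (hP2 _) hy
    intro w hw
    have h : (y - lam • Gmap f (x, y)) - y = lam • (-(Gmap f (x, y))) := by module
    rw [h, real_inner_smul_left]
    exact mul_nonpos_of_nonneg_of_nonpos hlampos.le (hVI w hw)
  have hVI_of_fix : ∀ (x : Eu n) (y : Eu m), P (y - lam • Gmap f (x, y)) = y →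
      y ∈ Y ∧ ∀ w ∈ Y, ⟪-(Gmap f (x, y)), w - y⟫ ≤ 0 := by
    intro x y hfix
    constructor
    · rw [← hfix]; exact hP1 _
    intro w hw
    have h := hP2 (y - lam • Gmap f (x, y)) w hw
    rw [hfix] at h
    have heq : (y - lam • Gmap f (x, y)) - y = lam • (-(Gmap f (x, y))) := by module
    rw [heq, real_inner_smul_left] at h
    nlinarith [h, hlampos]
  -- the reference point is a fixed point at xbar
  have hybarY : ybar ∈ Y := hybar.1
  have hybarVI : ∀ w ∈ Y, ⟪-(Gmap f (xbar, ybar)), w - ybar⟫ ≤ 0 :=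
    (frechetNC_convex hYcv hybarY _).mp hybar.2
  have hybarfix : P (ybar - lam • Gmap f (xbar, ybar)) = ybar :=
    hfix_of_VI xbar ybar hybarY hybarVI
  have hybarB : ybar ∈ Y ∩ Metric.closedBall ybar r0 :=
    ⟨hybarY, Metric.mem_closedBall_self hr0pos.le⟩
  -- the localization radius in x
  set δ : ℝ := min (r1/2) ((1 - q) * r0 / (2 * lam * Lr)) with hδdef
  have hδpos : 0 < δ := by
    rw [hδdef]
    exact lt_min (by positivity) (by positivity)
  have hδr1 : δ < r1 := by
    calc δ ≤ r1/2 := by rw [hδdef]; exact min_le_left _ _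
      _ < r1 := by linarith
  clear_value δ
  have hδsmall : lam * Lr * δ ≤ (1 - q) * r0 / 2 := by
    have h1 : δ ≤ (1 - q) * r0 / (2 * lam * Lr) := by rw [hδdef]; exact min_le_right _ _
    have h2 : lam * Lr * ((1 - q) * r0 / (2 * lam * Lr)) = (1 - q) * r0 / 2 := by
      field_simp
    calc lam * Lr * δ ≤ lam * Lr * ((1 - q) * r0 / (2 * lam * Lr)) :=
          mul_le_mul_of_nonneg_left h1 (by positivity)
      _ = (1 - q) * r0 / 2 := h2
  -- Lipschitz of G in x at fixed y near ybar
  have hGlipx : ∀ (x x' : Eu n), dist x xbar < r1 → dist x' xbar < r1 →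
      ∀ z ∈ Metric.closedBall ybar r0,
      ‖Gmap f (x, z) - Gmap f (x', z)‖ ≤ Lr * ‖x - x'‖ := by
    intro x x' hx hx' z hz
    have hm1 : ((x, z) : Eu n × Eu m) ∈ Metric.ball (xbar, ybar) r1 := by
      rw [Metric.mem_ball, Prod.dist_eq]
      exact max_lt hx (lt_of_le_of_lt (Metric.mem_closedBall.mp hz) hr0r1)
    have hm2 : ((x', z) : Eu n × Eu m) ∈ Metric.ball (xbar, ybar) r1 := by
      rw [Metric.mem_ball, Prod.dist_eq]
      exact max_lt hx' (lt_of_le_of_lt (Metric.mem_closedBall.mp hz) hr0r1)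
    have h := hGlip _ hm1 _ hm2
    have hnp : ‖((x, z) : Eu n × Eu m) - (x', z)‖ = ‖x - x'‖ := by
      rw [Prod.norm_def]
      simp
    rw [hnp] at h; exact h
  -- self-mapping of the closed ball
  have hself : ∀ x : Eu n, dist x xbar < δ → ∀ y ∈ Y ∩ Metric.closedBall ybar r0,
      P (y - lam • Gmap f (x, y)) ∈ Y ∩ Metric.closedBall ybar r0 := by
    intro x hx y hy
    refine ⟨hP1 _, ?_⟩
    have hxr1 : dist x xbar < r1 := lt_trans hx hδr1
    have hxbr1 : dist xbar xbar < r1 := by simpa using hr1pos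
    have t1 : ‖P (y - lam • Gmap f (x, y)) - P (ybar - lam • Gmap f (x, ybar))‖
        ≤ q * ‖y - ybar‖ :=
      le_trans (projC_nonexpansive (hP1 _) (hP2 _) (hP1 _) (hP2 _))
        (hcon x hxr1 y hy ybar hybarB)
    have t2 : ‖P (ybar - lam • Gmap f (x, ybar)) - P (ybar - lam • Gmap f (xbar, ybar))‖
        ≤ lam * Lr * dist x xbar := by
      refine le_trans (projC_nonexpansive (hP1 _) (hP2 _) (hP1 _) (hP2 _)) ?_
      have heq : (ybar - lam • Gmap f (x, ybar)) - (ybar - lam • Gmap f (xbar, ybar))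
          = lam • (Gmap f (xbar, ybar) - Gmap f (x, ybar)) := by module
      rw [heq, norm_smul, Real.norm_eq_abs, abs_of_pos hlampos]
      have hGx := hGlipx xbar x hxbr1 hxr1 ybar (Metric.mem_closedBall_self hr0pos.le)
      calc lam * ‖Gmap f (xbar, ybar) - Gmap f (x, ybar)‖ ≤ lam * (Lr * ‖xbar - x‖) :=
            mul_le_mul_of_nonneg_left hGx hlampos.le
        _ = lam * Lr * dist x xbar := by rw [dist_eq_norm, norm_sub_rev]; ring
    rw [hybarfix] at t2
    rw [Metric.mem_closedBall, dist_eq_norm]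
    have tri := dist_triangle (P (y - lam • Gmap f (x, y)))
      (P (ybar - lam • Gmap f (x, ybar))) ybar
    rw [dist_eq_norm, dist_eq_norm, dist_eq_norm] at tri
    have hyb : ‖y - ybar‖ ≤ r0 := by
      rw [← dist_eq_norm]; exact Metric.mem_closedBall.mp hy.2
    have hx2 : lam * Lr * dist x xbar ≤ (1 - q) * r0 / 2 :=
      le_trans (mul_le_mul_of_nonneg_left hx.le (by positivity)) hδsmall
    have hq2 : q * ‖y - ybar‖ ≤ q * r0 := mul_le_mul_of_nonneg_left hyb hq0.le
    nlinarith [mul_pos h1q hr0pos]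
  -- existence and uniqueness of fixed points
  have hBclosed : IsClosed (Y ∩ Metric.closedBall ybar r0) :=
    hYcl.inter Metric.isClosed_closedBall
  have hexu : ∀ x : Eu n, dist x xbar < δ →
      ∃ z : Eu m, (z ∈ Y ∩ Metric.closedBall ybar r0 ∧ P (z - lam • Gmap f (x, z)) = z) ∧
        ∀ z', z' ∈ Y ∩ Metric.closedBall ybar r0 → P (z' - lam • Gmap f (x, z')) = z' →
          z' = z := by
    intro x hx
    haveI : Nonempty ↥(Y ∩ Metric.closedBall ybar r0) := ⟨⟨ybar, hybarB⟩⟩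
    haveI : CompleteSpace ↥(Y ∩ Metric.closedBall ybar r0) := hBclosed.completeSpace_coe
    have hxr1 : dist x xbar < r1 := lt_trans hx hδr1
    set Φ : ↥(Y ∩ Metric.closedBall ybar r0) → ↥(Y ∩ Metric.closedBall ybar r0) :=
      fun z => ⟨P ((z : Eu m) - lam • Gmap f (x, (z : Eu m))), hself x hx _ z.2⟩ with hΦ
    have hc : ContractingWith ⟨q, hq0.le⟩ Φ := by
      constructor
      · exact_mod_cast hq1
      · apply LipschitzWith.of_dist_le_mul
        intro z z'
        rw [Subtype.dist_eq, Subtype.dist_eq, dist_eq_norm, dist_eq_norm]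
        have step : ‖(Φ z : Eu m) - (Φ z' : Eu m)‖ ≤ q * ‖(z : Eu m) - (z' : Eu m)‖ := by
          rw [hΦ]
          exact le_trans (projC_nonexpansive (hP1 _) (hP2 _) (hP1 _) (hP2 _))
            (hcon x hxr1 _ z.2 _ z'.2)
        exact step
    refine ⟨(ContractingWith.fixedPoint Φ hc : ↥(Y ∩ Metric.closedBall ybar r0)), ⟨?_, ?_⟩, ?_⟩
    · exact (ContractingWith.fixedPoint Φ hc).2
    · have hfp := hc.fixedPoint_isFixedPt
      have := congrArg Subtype.val hfp
      exact this
    · intro z' hz' hfixz'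
      have hz'fix : Function.IsFixedPt Φ ⟨z', hz'⟩ := Subtype.ext (by rw [hΦ]; exact hfixz')
      exact congrArg Subtype.val (hc.fixedPoint_unique hz'fix)
  choose! s hs1 hs2 using hexu
  have hsB : ∀ x : Eu n, dist x xbar < δ → s x ∈ Y ∩ Metric.closedBall ybar r0 :=
    fun x hx => (hs1 x hx).1
  have hsfix : ∀ x : Eu n, dist x xbar < δ → P (s x - lam • Gmap f (x, s x)) = s x :=
    fun x hx => (hs1 x hx).2
  have hxbarmem : dist xbar xbar < δ := by simpa using hδpos
  have hsxbar : s xbar = ybar := (hs2 xbar hxbarmem ybar hybarB hybarfix).symm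
  -- Lipschitz estimate for s
  set L2 : ℝ := lam * Lr / (1 - q) with hL2def
  have hL2pos : 0 < L2 := by rw [hL2def]; positivity
  clear_value L2
  have hslip : ∀ x : Eu n, dist x xbar < δ → ∀ x' : Eu n, dist x' xbar < δ →
      ‖s x - s x'‖ ≤ L2 * ‖x - x'‖ := by
    intro x hx x' hx'
    have hxr1 : dist x xbar < r1 := lt_trans hx hδr1
    have hxr1' : dist x' xbar < r1 := lt_trans hx' hδr1
    have t1 : ‖P (s x - lam • Gmap f (x, s x)) - P (s x' - lam • Gmap f (x, s x'))‖
        ≤ q * ‖s x - s x'‖ :=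
      le_trans (projC_nonexpansive (hP1 _) (hP2 _) (hP1 _) (hP2 _))
        (hcon x hxr1 _ (hsB x hx) _ (hsB x' hx'))
    have t2 : ‖P (s x' - lam • Gmap f (x, s x')) - P (s x' - lam • Gmap f (x', s x'))‖
        ≤ lam * Lr * ‖x - x'‖ := by
      refine le_trans (projC_nonexpansive (hP1 _) (hP2 _) (hP1 _) (hP2 _)) ?_
      have heq : (s x' - lam • Gmap f (x, s x')) - (s x' - lam • Gmap f (x', s x'))
          = lam • (Gmap f (x', s x') - Gmap f (x, s x')) := by module
      rw [heq, norm_smul, Real.norm_eq_abs, abs_of_pos hlampos]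
      have hGx := hGlipx x' x hxr1' hxr1 (s x') (hsB x' hx').2
      calc lam * ‖Gmap f (x', s x') - Gmap f (x, s x')‖ ≤ lam * (Lr * ‖x' - x‖) :=
            mul_le_mul_of_nonneg_left hGx hlampos.le
        _ = lam * Lr * ‖x - x'‖ := by rw [norm_sub_rev]; ring
    have tri := dist_triangle (P (s x - lam • Gmap f (x, s x)))
      (P (s x' - lam • Gmap f (x, s x'))) (P (s x' - lam • Gmap f (x', s x')))
    rw [dist_eq_norm, dist_eq_norm, dist_eq_norm] at tri
    rw [hsfix x hx, hsfix x' hx'] at tri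
    rw [hsfix x hx] at t1
    rw [hsfix x' hx'] at t2
    have hmain : (1 - q) * ‖s x - s x'‖ ≤ lam * Lr * ‖x - x'‖ := by linarith
    rw [hL2def]
    rw [div_mul_eq_mul_div, le_div_iff₀ h1q]
    linarith [hmain]
  have hsnear : ∀ x : Eu n, dist x xbar < δ → ‖s x - ybar‖ < r0 := by
    intro x hx
    have h1 := hslip x hx xbar hxbarmem
    rw [hsxbar] at h1
    have h2 : L2 * ‖x - xbar‖ < L2 * δ := by
      apply mul_lt_mul_of_pos_left _ hL2pos
      rw [← dist_eq_norm]; exact hx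
    have h3 : L2 * δ ≤ r0 / 2 := by
      have hd : δ ≤ (1 - q) * r0 / (2 * lam * Lr) := by rw [hδdef]; exact min_le_right _ _
      have heq : L2 * ((1 - q) * r0 / (2 * lam * Lr)) = r0 / 2 := by
        rw [hL2def]; field_simp
      calc L2 * δ ≤ L2 * ((1 - q) * r0 / (2 * lam * Lr)) :=
            mul_le_mul_of_nonneg_left hd hL2pos.le
        _ = r0 / 2 := heq
    calc ‖s x - ybar‖ ≤ L2 * ‖x - xbar‖ := h1
      _ < L2 * δ := h2
      _ ≤ r0 / 2 := h3
      _ < r0 := by linarith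
  -- assemble the localization
  refine ⟨Metric.ball xbar δ, Metric.ball ybar r0, s, ⟨L2, hL2pos.le⟩, Metric.isOpen_ball,
    Metric.mem_ball_self hδpos, Metric.isOpen_ball, Metric.mem_ball_self hr0pos, ?_, ?_, ?_⟩
  · apply LipschitzOnWith.of_dist_le_mul
    intro x hx x' hx'
    rw [dist_eq_norm, dist_eq_norm]
    exact hslip x (Metric.mem_ball.mp hx) x' (Metric.mem_ball.mp hx')
  · intro x hx
    rw [Metric.mem_ball, dist_eq_norm]
    exact hsnear x (Metric.mem_ball.mp hx)
  · intro x hx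
    have hxδ : dist x xbar < δ := Metric.mem_ball.mp hx
    ext y
    simp only [Set.mem_inter_iff, Set.mem_singleton_iff]
    constructor
    · rintro ⟨hySFO, hyV⟩
      have hyY : y ∈ Y := hySFO.1
      have hVI : ∀ w ∈ Y, ⟪-(Gmap f (x, y)), w - y⟫ ≤ 0 :=
        (frechetNC_convex hYcv hyY _).mp hySFO.2
      have hfixy := hfix_of_VI x y hyY hVI
      have hyB : y ∈ Y ∩ Metric.closedBall ybar r0 :=
        ⟨hyY, Metric.ball_subset_closedBall hyV⟩
      exact hs2 x hxδ y hyB hfixy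
    · rintro rfl
      refine ⟨⟨(hsB x hxδ).1, ?_⟩, ?_⟩
      · obtain ⟨-, hVI⟩ := hVI_of_fix x (s x) (hsfix x hxδ)
        exact (frechetNC_convex hYcv (hsB x hxδ).1 _).mpr hVI
      · rw [Metric.mem_ball, dist_eq_norm]
        exact hsnear x hxδ

/-- localization of `S_FO` under strong monotonicity of the Hessian
over `Y - Y` for a closed convex set `Y`. -/
theorem stmt3 {n m : ℕ} (Y : Set (Eu m)) (hYne : Y.Nonempty) (hYcl : IsClosed Y)
    (hYcv : Convex ℝ Y) (f : Eu n → Eu m → ℝ) (xbar : Eu n) (ybar : Eu m)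
    (hybar : ybar ∈ SFO Y f xbar)
    (hf : ContDiffAt ℝ 2 (fun p : Eu n × Eu m => f p.1 p.2) (xbar, ybar))
    (μ : ℝ) (hμ : 0 < μ)
    (hmono : ∀ y ∈ Y, ∀ y' ∈ Y,
      μ * ‖y - y'‖ ^ 2 ≤ ⟪y - y', fderiv ℝ (fun y'' => gradY f xbar y'') ybar (y - y')⟫) :
    HasLipLoc (SFO Y f) xbar ybar := by
  exact stmt3' Y hYne hYcl hYcv f xbar ybar hybar hf μ hμ hmono
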